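/- arXiv:1102.5588 — 3 statements merged into one kernel-verified Lean document; each statement's English description precedes it below -/
import Mathlib

section
/- For every λ ∈ ℝ, the kernel is recovered from the resolvent kernel by K(t,s) = -λ ∫_s^t Γ(λ;t,η) K(η,s) dη + Γ(λ;t,s) for all (t,s) ∈ Ω; that is, the resolvent kernel of Γ is the kernel K itself. -/
open MeasureTheory intervalIntegral Set

/-- The iterated kernels: `K₀ = K` and `Kₙ(t,s) = ∫_s^t K(t,η) K_{n-1}(η,s) dη` for `n ≥ 1`. -/
noncomputable def iterK (K : ℝ → ℝ → ℝ) : ℕ → ℝ → ℝ → ℝ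
  | 0 => K
  | n + 1 => fun t s => ∫ η in s..t, K t η * iterK K n η s

private lemma iterK_cont (K : ℝ → ℝ → ℝ) (hK : Continuous fun p : ℝ × ℝ => K p.1 p.2) :
    ∀ n, Continuous fun p : ℝ × ℝ => iterK K n p.1 p.2 := by
  intro n
  induction n with
  | zero => exact hK
  | succ n ih =>
    have hF : Continuous (Function.uncurry fun (p : ℝ × ℝ) (η : ℝ) =>
        K p.1 η * iterK K n η p.2) := by
      apply Continuous.mul
      · exact hK.comp ((continuous_fst.comp continuous_fst).prodMk continuous_snd)
      · exact ih.comp (continuous_snd.prodMk (continuous_snd.comp continuous_fst))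
    have h1 : Continuous fun p : ℝ × ℝ => ∫ η in (0:ℝ)..p.1, K p.1 η * iterK K n η p.2 :=
      intervalIntegral.continuous_parametric_intervalIntegral_of_continuous hF continuous_fst
    have h2 : Continuous fun p : ℝ × ℝ => ∫ η in (0:ℝ)..p.2, K p.1 η * iterK K n η p.2 :=
      intervalIntegral.continuous_parametric_intervalIntegral_of_continuous hF continuous_snd
    have key : ∀ p : ℝ × ℝ, iterK K (n+1) p.1 p.2 =
        (∫ η in (0:ℝ)..p.1, K p.1 η * iterK K n η p.2)
        - ∫ η in (0:ℝ)..p.2, K p.1 η * iterK K n η p.2 := by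
      intro p
      have hc : Continuous fun η => K p.1 η * iterK K n η p.2 :=
        hF.comp (continuous_const.prodMk continuous_id)
      rw [intervalIntegral.integral_interval_sub_left (hc.intervalIntegrable _ _)
        (hc.intervalIntegrable _ _)]
      rfl
    have hk : (fun p : ℝ × ℝ => iterK K (n+1) p.1 p.2) = fun p =>
        (∫ η in (0:ℝ)..p.1, K p.1 η * iterK K n η p.2)
        - ∫ η in (0:ℝ)..p.2, K p.1 η * iterK K n η p.2 := funext key
    rw [hk]; exact h1.sub h2
private lemma iterK_bound (a b M : ℝ) (hM0 : 0 ≤ M) (K : ℝ → ℝ → ℝ)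
    (hK : Continuous fun p : ℝ × ℝ => K p.1 p.2)
    (hM : ∀ t s, a ≤ s → s ≤ t → t ≤ b → |K t s| ≤ M) :
    ∀ n t s, a ≤ s → s ≤ t → t ≤ b →
      |iterK K n t s| ≤ M ^ (n + 1) * (t - s) ^ n / (n.factorial : ℝ) := by
  intro n
  induction n with
  | zero =>
    intro t s has hst htb
    simpa [iterK] using hM t s has hst htb
  | succ n ih =>
    intro t s has hst htb
    have hbnd : ‖∫ η in s..t, K t η * iterK K n η s‖ ≤
        |∫ η in s..t, M ^ (n + 2) / (n.factorial : ℝ) * (η - s) ^ n| := by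
      apply intervalIntegral.norm_integral_le_abs_of_norm_le
      · rw [uIoc_of_le hst]
        filter_upwards [ae_restrict_mem measurableSet_Ioc] with η hη
        have h1 : |K t η| ≤ M := hM t η (has.trans hη.1.le) hη.2 htb
        have h2 : |iterK K n η s| ≤ M ^ (n + 1) * (η - s) ^ n / (n.factorial : ℝ) :=
          ih η s has hη.1.le (hη.2.trans htb)
        have h3 : ‖K t η * iterK K n η s‖ = |K t η| * |iterK K n η s| := abs_mul _ _
        rw [h3]
        calc |K t η| * |iterK K n η s| ≤ M * (M ^ (n + 1) * (η - s) ^ n / (n.factorial : ℝ)) :=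
              mul_le_mul h1 h2 (abs_nonneg _) hM0
          _ = M ^ (n + 2) / (n.factorial : ℝ) * (η - s) ^ n := by ring
      · exact ((continuous_const.mul ((continuous_id.sub continuous_const).pow n)).intervalIntegrable _ _)
    have hint : (∫ η in s..t, M ^ (n + 2) / (n.factorial : ℝ) * (η - s) ^ n) =
        M ^ (n + 2) / (n.factorial : ℝ) * ((t - s) ^ (n + 1) / (n + 1)) := by
      rw [intervalIntegral.integral_const_mul]
      congr 1
      have := intervalIntegral.integral_comp_sub_right (a := s) (b := t) (fun x => x ^ n) s
      rw [this, sub_self, integral_pow]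
      simp
    have hnn : 0 ≤ M ^ (n + 2) / (n.factorial : ℝ) * ((t - s) ^ (n + 1) / (n + 1)) := by
      have : (0:ℝ) ≤ t - s := by linarith
      positivity
    rw [hint, abs_of_nonneg hnn] at hbnd
    calc |iterK K (n + 1) t s| = ‖∫ η in s..t, K t η * iterK K n η s‖ := rfl
      _ ≤ M ^ (n + 2) / (n.factorial : ℝ) * ((t - s) ^ (n + 1) / (n + 1)) := hbnd
      _ = M ^ (n + 1 + 1) * (t - s) ^ (n + 1) / ((n + 1).factorial : ℝ) := by
          push_cast [Nat.factorial_succ]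
          rw [div_mul_div_comm]
          ring

private lemma triangle_swap (f : ℝ → ℝ → ℝ) (hf : Continuous (Function.uncurry f))
    {s t : ℝ} (hst : s ≤ t) :
    (∫ η in s..t, ∫ ξ in s..η, f η ξ) = ∫ ξ in s..t, ∫ η in ξ..t, f η ξ := by
  set μ : Measure ℝ := volume.restrict (Ioc s t) with hμ
  have hfinμ : IsFiniteMeasure μ := ⟨by
    rw [hμ, Measure.restrict_apply_univ]; exact measure_Ioc_lt_top⟩
  set F : ℝ × ℝ → ℝ := fun p => if p.2 ≤ p.1 then f p.1 p.2 else 0 with hF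
  have hsetm : MeasurableSet {p : ℝ × ℝ | p.2 ≤ p.1} :=
    measurableSet_le measurable_snd measurable_fst
  have hFeq : F = Set.indicator {p : ℝ × ℝ | p.2 ≤ p.1} (Function.uncurry f) := by
    ext p; rw [Set.indicator_apply]; rfl
  have hFmeas : AEStronglyMeasurable F (μ.prod μ) := by
    rw [hFeq]
    exact (hf.stronglyMeasurable.indicator hsetm).aestronglyMeasurable
  -- bound on the square
  obtain ⟨C, hC⟩ := (isCompact_Icc.prod isCompact_Icc).exists_bound_of_continuousOn
    (s := Icc s t ×ˢ Icc s t) hf.continuousOn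
  have hFint : Integrable F (μ.prod μ) := by
    apply Integrable.mono' (integrable_const (max C 0)) hFmeas
    have hprod : μ.prod μ = (volume.prod volume).restrict (Ioc s t ×ˢ Ioc s t) := by
      rw [hμ, Measure.prod_restrict]
    rw [hprod]
    filter_upwards [ae_restrict_mem (measurableSet_Ioc.prod measurableSet_Ioc)] with p hp
    rw [hF]
    dsimp only
    split
    · refine le_trans (hC p ⟨?_, ?_⟩) (le_max_left _ _)
      · exact ⟨hp.1.1.le, hp.1.2⟩
      · exact ⟨hp.2.1.le, hp.2.2⟩
    · simpa using le_max_right C 0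
  have swap := MeasureTheory.integral_integral_swap (f := fun η ξ => F (η, ξ))
    (μ := μ) (ν := μ) (by exact hFint)
  have hL : (∫ η in s..t, ∫ ξ in s..η, f η ξ) = ∫ η, (∫ ξ, F (η, ξ) ∂μ) ∂μ := by
    rw [intervalIntegral.integral_of_le hst]
    apply setIntegral_congr_ae measurableSet_Ioc
    filter_upwards with η hη
    have h1 : (∫ ξ, F (η, ξ) ∂μ) = ∫ ξ in Ioc s t, (Iic η).indicator (f η) ξ := by
      apply MeasureTheory.integral_congr_ae
      filter_upwards with ξ
      rw [hF, Set.indicator_apply]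
      simp only [mem_Iic]
    rw [h1, setIntegral_indicator measurableSet_Iic, Ioc_inter_Iic, min_eq_right hη.2,
      intervalIntegral.integral_of_le hη.1.le]
  have hR : (∫ ξ in s..t, ∫ η in ξ..t, f η ξ) = ∫ ξ, (∫ η, F (η, ξ) ∂μ) ∂μ := by
    rw [intervalIntegral.integral_of_le hst]
    apply setIntegral_congr_ae measurableSet_Ioc
    filter_upwards with ξ hξ
    have h1 : (∫ η, F (η, ξ) ∂μ) = ∫ η in Ioc s t, (Ici ξ).indicator (fun η => f η ξ) η := by
      apply MeasureTheory.integral_congr_ae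
      filter_upwards with η
      rw [hF, Set.indicator_apply]
      simp only [mem_Ici]
    have h2 : Ioc s t ∩ Ici ξ = Icc ξ t := by
      ext η
      simp only [mem_inter_iff, mem_Ioc, mem_Ici, mem_Icc]
      constructor
      · rintro ⟨⟨_, h⟩, h'⟩; exact ⟨h', h⟩
      · rintro ⟨h1, h2⟩; exact ⟨⟨lt_of_lt_of_le hξ.1 h1, h2⟩, h1⟩
    rw [h1, setIntegral_indicator measurableSet_Ici, h2, integral_Icc_eq_integral_Ioc,
      intervalIntegral.integral_of_le hξ.2]
  rw [hL, hR, swap]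
private lemma iterK_comm (K : ℝ → ℝ → ℝ) (hK : Continuous fun p : ℝ × ℝ => K p.1 p.2) :
    ∀ n, ∀ s t : ℝ, s ≤ t →
      iterK K (n + 1) t s = ∫ η in s..t, iterK K n t η * K η s := by
  intro n
  induction n with
  | zero =>
    intro s t _
    simp only [iterK]
  | succ n ih =>
    intro s t hst
    have hfc : Continuous (Function.uncurry fun η ξ => K t η * iterK K n η ξ * K ξ s) := by
      apply Continuous.mul
      · apply Continuous.mul
        · exact hK.comp (continuous_const.prodMk continuous_fst)
        · exact (iterK_cont K hK n).comp (continuous_fst.prodMk continuous_snd)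
      · exact hK.comp (continuous_snd.prodMk continuous_const)
    have h1 : iterK K (n + 1 + 1) t s
        = ∫ η in s..t, ∫ ξ in s..η, K t η * iterK K n η ξ * K ξ s := by
      show (∫ η in s..t, K t η * iterK K (n + 1) η s) = _
      apply intervalIntegral.integral_congr
      intro η hη
      rw [uIcc_of_le hst] at hη
      dsimp only
      rw [ih s η hη.1, ← intervalIntegral.integral_const_mul]
      apply intervalIntegral.integral_congr
      intro ξ _
      ring
    rw [h1, triangle_swap _ hfc hst]
    apply intervalIntegral.integral_congr
    intro ξ hξ
    rw [uIcc_of_le hst] at hξ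
    show (∫ η in ξ..t, K t η * iterK K n η ξ * K ξ s) = iterK K (n + 1) t ξ * K ξ s
    rw [show iterK K (n + 1) t ξ = ∫ η in ξ..t, K t η * iterK K n η ξ from rfl,
      ← intervalIntegral.integral_mul_const]

private lemma iterK_congr (a b : ℝ) (K K' : ℝ → ℝ → ℝ)
    (h : ∀ t s, a ≤ s → s ≤ t → t ≤ b → K t s = K' t s) :
    ∀ n t s, a ≤ s → s ≤ t → t ≤ b → iterK K n t s = iterK K' n t s := by
  intro n
  induction n with
  | zero => exact h
  | succ n ih =>
    intro t s has hst htb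
    show (∫ η in s..t, K t η * iterK K n η s) = ∫ η in s..t, K' t η * iterK K' n η s
    apply intervalIntegral.integral_congr
    intro η hη
    rw [uIcc_of_le hst] at hη
    dsimp only
    rw [h t η (has.trans hη.1) hη.2 htb, ih η s has hη.1 (hη.2.trans htb)]
/-- The resolvent kernel `Γ(λ;t,s) = Σ_{ℓ=0}^∞ K_ℓ(t,s) λ^ℓ`. -/
noncomputable def resolventKer (K : ℝ → ℝ → ℝ) (lam t s : ℝ) : ℝ :=
  ∑' ℓ : ℕ, iterK K ℓ t s * lam ^ ℓ

/-- Second identity of the **Reciprocity of Kernels** theorem (continuous case `T = ℝ`):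
for every `λ ∈ ℝ`, the kernel is recovered from the resolvent kernel by
`K(t,s) = -λ ∫_s^t Γ(λ;t,η) K(η,s) dη + Γ(λ;t,s)` on `Ω`; that is, the resolvent
kernel of `Γ` is `K` itself. -/
theorem kernel_resolvent_reciprocity
    (a b : ℝ) (hab : a < b) (K : ℝ → ℝ → ℝ)
    (hK : ContinuousOn (fun p : ℝ × ℝ => K p.1 p.2)
      {p : ℝ × ℝ | a ≤ p.2 ∧ p.2 ≤ p.1 ∧ p.1 ≤ b})
    (lam : ℝ) :
    ∀ t s : ℝ, a ≤ s → s ≤ t → t ≤ b →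
      K t s = -lam * (∫ η in s..t, resolventKer K lam t η * K η s) +
        resolventKer K lam t s := by
  -- Extend `K` to a continuous function on the whole plane (Tietze).
  have hΩclosed : IsClosed {p : ℝ × ℝ | a ≤ p.2 ∧ p.2 ≤ p.1 ∧ p.1 ≤ b} :=
    (isClosed_le continuous_const continuous_snd).inter
      ((isClosed_le continuous_snd continuous_fst).inter
        (isClosed_le continuous_fst continuous_const))
  obtain ⟨g, hg⟩ := ContinuousMap.exists_restrict_eq (X := ℝ × ℝ) (Y := ℝ) hΩclosed
    ⟨_, hK.restrict⟩
  set Kc : ℝ → ℝ → ℝ := fun x y => g (x, y) with hKcdef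
  have hKc : Continuous fun p : ℝ × ℝ => Kc p.1 p.2 := g.continuous
  have hEq : ∀ x y : ℝ, a ≤ y → y ≤ x → x ≤ b → K x y = Kc x y := by
    intro x y h1 h2 h3
    have := DFunLike.congr_fun hg
      (⟨(x, y), ⟨h1, h2, h3⟩⟩ : {p : ℝ × ℝ | a ≤ p.2 ∧ p.2 ≤ p.1 ∧ p.1 ≤ b})
    exact this.symm
  -- A uniform bound on the square.
  obtain ⟨C, hC⟩ := (isCompact_Icc.prod isCompact_Icc).exists_bound_of_continuousOn
    (s := Icc a b ×ˢ Icc a b) g.continuous.continuousOn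
  set M : ℝ := max C 0 with hMdef
  have hM0 : (0:ℝ) ≤ M := le_max_right _ _
  have hM : ∀ x y : ℝ, a ≤ y → y ≤ x → x ≤ b → |Kc x y| ≤ M := fun x y h1 h2 h3 =>
    le_trans (hC (x, y) ⟨⟨h1.trans h2, h3⟩, ⟨h1, h2.trans h3⟩⟩) (le_max_left _ _)
  have hba : (0:ℝ) ≤ b - a := by linarith
  set B : ℕ → ℝ := fun ℓ => M * ((M * (b - a) * |lam|) ^ ℓ / (ℓ.factorial : ℝ)) with hBdef
  have hBsum : Summable B := (Real.summable_pow_div_factorial _).mul_left M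
  have hBnonneg : ∀ ℓ, 0 ≤ B ℓ := by
    intro ℓ
    have h' : (0:ℝ) ≤ M * (b - a) * |lam| := by positivity
    rw [hBdef]; positivity
  have hKbound := iterK_bound a b M hM0 Kc hKc hM
  have hterm : ∀ x y : ℝ, a ≤ y → y ≤ x → x ≤ b → ∀ ℓ : ℕ,
      |iterK Kc ℓ x y * lam ^ ℓ| ≤ B ℓ := by
    intro x y h1 h2 h3 ℓ
    have hxy : (0:ℝ) ≤ x - y := by linarith
    calc |iterK Kc ℓ x y * lam ^ ℓ| = |iterK Kc ℓ x y| * |lam| ^ ℓ := by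
          rw [abs_mul, abs_pow]
      _ ≤ (M ^ (ℓ + 1) * (x - y) ^ ℓ / (ℓ.factorial : ℝ)) * |lam| ^ ℓ :=
          mul_le_mul_of_nonneg_right (hKbound ℓ x y h1 h2 h3) (pow_nonneg (abs_nonneg lam) ℓ)
      _ = M * ((M * (x - y) * |lam|) ^ ℓ / (ℓ.factorial : ℝ)) := by
          rw [show (M * (x - y) * |lam|) ^ ℓ = M ^ ℓ * (x - y) ^ ℓ * |lam| ^ ℓ by
            rw [mul_pow, mul_pow], pow_succ]
          ring
      _ ≤ B ℓ := by
          rw [hBdef]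
          have hbase0 : (0:ℝ) ≤ M * (x - y) * |lam| := by positivity
          have hbase : M * (x - y) * |lam| ≤ M * (b - a) * |lam| := by
            apply mul_le_mul_of_nonneg_right _ (abs_nonneg lam)
            apply mul_le_mul_of_nonneg_left (by linarith) hM0
          have hfac : (0:ℝ) < (ℓ.factorial : ℝ) := by positivity
          exact mul_le_mul_of_nonneg_left
            ((div_le_div_iff_of_pos_right hfac).2 (pow_le_pow_left₀ hbase0 hbase ℓ)) hM0
  have hsumm : ∀ x y : ℝ, a ≤ y → y ≤ x → x ≤ b →
      Summable (fun ℓ : ℕ => iterK Kc ℓ x y * lam ^ ℓ) := fun x y h1 h2 h3 =>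
    Summable.of_norm_bounded hBsum (fun ℓ => by
      rw [Real.norm_eq_abs]; exact hterm x y h1 h2 h3 ℓ)
  intro t s has hst htb
  have hresΩ : ∀ x y : ℝ, a ≤ y → y ≤ x → x ≤ b →
      resolventKer K lam x y = resolventKer Kc lam x y := by
    intro x y h1 h2 h3
    exact tsum_congr fun ℓ => by rw [iterK_congr a b K Kc hEq ℓ x y h1 h2 h3]
  have hI : (∫ η in s..t, resolventKer K lam t η * K η s)
      = ∫ η in s..t, resolventKer Kc lam t η * Kc η s := by
    apply intervalIntegral.integral_congr
    intro η hη
    rw [uIcc_of_le hst] at hη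
    dsimp only
    rw [hresΩ t η (has.trans hη.1) hη.2 htb, hEq η s has hη.1 (hη.2.trans htb)]
  have hmeasℓ : ∀ ℓ : ℕ, AEStronglyMeasurable (fun η => iterK Kc ℓ t η * lam ^ ℓ * Kc η s)
      (volume.restrict (Ioc s t)) := by
    intro ℓ
    apply Continuous.aestronglyMeasurable
    apply Continuous.mul
    · exact ((iterK_cont Kc hKc ℓ).comp (continuous_const.prodMk continuous_id)).mul
        continuous_const
    · exact hKc.comp (continuous_id.prodMk continuous_const)
  have hlint : ∀ ℓ : ℕ, (∫⁻ η in Ioc s t, ‖iterK Kc ℓ t η * lam ^ ℓ * Kc η s‖₊) ≤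
      ENNReal.ofReal (B ℓ * M) * volume (Ioc s t) := by
    intro ℓ
    have hb : ∀ᵐ η ∂(volume.restrict (Ioc s t)),
        (‖iterK Kc ℓ t η * lam ^ ℓ * Kc η s‖₊ : ENNReal) ≤ ENNReal.ofReal (B ℓ * M) := by
      filter_upwards [ae_restrict_mem measurableSet_Ioc] with η hη
      rw [← enorm_eq_nnnorm, ← ofReal_norm]
      apply ENNReal.ofReal_le_ofReal
      have h1 : |iterK Kc ℓ t η * lam ^ ℓ| ≤ B ℓ := hterm t η (has.trans hη.1.le) hη.2 htb ℓ
      have h2 : |Kc η s| ≤ M := hM η s has hη.1.le (hη.2.trans htb)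
      calc ‖iterK Kc ℓ t η * lam ^ ℓ * Kc η s‖
          = |iterK Kc ℓ t η * lam ^ ℓ| * |Kc η s| := by rw [Real.norm_eq_abs, abs_mul]
        _ ≤ B ℓ * M := mul_le_mul h1 h2 (abs_nonneg _) (hBnonneg ℓ)
    calc (∫⁻ η in Ioc s t, ‖iterK Kc ℓ t η * lam ^ ℓ * Kc η s‖₊)
        ≤ ∫⁻ _η in Ioc s t, ENNReal.ofReal (B ℓ * M) := lintegral_mono_ae hb
      _ = ENNReal.ofReal (B ℓ * M) * volume (Ioc s t) := setLIntegral_const _ _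
  have hfin : (∑' ℓ : ℕ, ∫⁻ η in Ioc s t, ‖iterK Kc ℓ t η * lam ^ ℓ * Kc η s‖₊) ≠ ⊤ := by
    apply ne_top_of_le_ne_top _ (ENNReal.tsum_le_tsum hlint)
    rw [ENNReal.tsum_mul_right]
    apply ENNReal.mul_ne_top _ measure_Ioc_lt_top.ne
    rw [← ENNReal.ofReal_tsum_of_nonneg (fun ℓ => mul_nonneg (hBnonneg ℓ) hM0)
      (hBsum.mul_right M)]
    exact ENNReal.ofReal_ne_top
  have hswap := MeasureTheory.integral_tsum hmeasℓ hfin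
  have hJ : (∫ η in s..t, resolventKer Kc lam t η * Kc η s)
      = ∑' ℓ : ℕ, lam ^ ℓ * iterK Kc (ℓ + 1) t s := by
    have e1 : (∫ η in s..t, resolventKer Kc lam t η * Kc η s)
        = ∫ η in Ioc s t, ∑' ℓ : ℕ, iterK Kc ℓ t η * lam ^ ℓ * Kc η s := by
      rw [intervalIntegral.integral_of_le hst]
      apply setIntegral_congr_ae measurableSet_Ioc
      filter_upwards with η hη
      simp only [resolventKer]
      exact (tsum_mul_right).symm
    rw [e1, hswap]
    apply tsum_congr
    intro ℓ
    rw [← intervalIntegral.integral_of_le hst]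
    have e2 : (∫ η in s..t, iterK Kc ℓ t η * lam ^ ℓ * Kc η s)
        = lam ^ ℓ * ∫ η in s..t, iterK Kc ℓ t η * Kc η s := by
      rw [← intervalIntegral.integral_const_mul]
      apply intervalIntegral.integral_congr
      intro η _
      dsimp only
      ring
    rw [e2, ← iterK_comm Kc hKc ℓ s t hst]
  have hsum0 : Summable (fun ℓ : ℕ => iterK Kc ℓ t s * lam ^ ℓ) := hsumm t s has hst htb
  have hΓ : resolventKer Kc lam t s
      = Kc t s + lam * ∑' ℓ : ℕ, lam ^ ℓ * iterK Kc (ℓ + 1) t s := by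
    simp only [resolventKer]
    rw [hsum0.tsum_eq_zero_add]
    congr 1
    · simp [iterK]
    · rw [← tsum_mul_left]
      apply tsum_congr
      intro ℓ
      rw [pow_succ]
      ring
  rw [hI, hJ, hresΩ t s has hst htb, hΓ, hEq t s has hst htb]
  ring
end

section
/- Let n ≥ 1, let p_1,…,p_n, q : ℝ → ℝ be continuous, fix s ∈ [a,b] and y_0,…,y_{n-1} ∈ ℝ. If y : ℝ → ℝ is n times continuously differentiable on [s,b] and satisfies y^{(n)}(t) + Σ_{i=0}^{n-1} p_{n-i}(t) y^{(i)}(t) = q(t) for t ∈ [s,b] together with y^{(i)}(s) = y_i for i = 0,…,n-1, then φ := y^{(n)} satisfies the Volterra integral equation φ(t) = -∫_s^t [Σ_{i=0}^{n-1} p_{n-i}(t) (t-η)^{n-i-1}/(n-i-1)!] φ(η) dη + q(t) - Σ_{i=0}^{n-1} Σ_{k=0}^{n-i-1} y_{k+i} p_{n-i}(t) (t-s)^k / k! for all t ∈ [s,b]. -/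
open MeasureTheory intervalIntegral Set

private lemma iterDeriv_comp_aux {y : ℝ → ℝ} {S : Set ℝ} (hS : UniqueDiffOn ℝ S)
    (i : ℕ) : ∀ k : ℕ, ∀ x ∈ S,
    iteratedDerivWithin k (iteratedDerivWithin i y S) S x =
      iteratedDerivWithin (i + k) y S x := by
  intro k
  induction k with
  | zero => intro x hx; simp
  | succ k ih =>
    intro x hx
    rw [iteratedDerivWithin_succ,
      derivWithin_congr (fun z hz => ih z hz) (ih x hx),
      show i + (k + 1) = (i + k) + 1 from rfl,
      iteratedDerivWithin_succ]

/-- **From an `n`-th order linear IVP to a Volterra equation of the second kind**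
(continuous case `T = ℝ`, `h_k(t,s) = (t-s)^k/k!`): if `y` is `n` times continuously
differentiable on `[s,b]` and satisfies
`y⁽ⁿ⁾(t) + Σ_{i=0}^{n-1} p_{n-i}(t) y⁽ⁱ⁾(t) = q(t)` on `[s,b]` with `y⁽ⁱ⁾(s) = yᵢ`,
then `φ := y⁽ⁿ⁾` satisfies
`φ(t) = -∫_s^t [Σ_{i<n} p_{n-i}(t) (t-η)^{n-i-1}/(n-i-1)!] φ(η) dη
        + q(t) - Σ_{i<n} Σ_{k<n-i} y_{k+i} p_{n-i}(t) (t-s)^k/k!`. -/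
theorem linear_ivp_to_volterra
    (a b : ℝ) (hab : a < b) (n : ℕ) (hn : 1 ≤ n)
    (p : ℕ → ℝ → ℝ) (q : ℝ → ℝ)
    (hp : ∀ i, Continuous (p i)) (hq : Continuous q)
    (s : ℝ) (hs : s ∈ Set.Icc a b)
    (y₀ : ℕ → ℝ) (y : ℝ → ℝ)
    (hy : ContDiffOn ℝ n y (Set.Icc s b))
    (hode : ∀ t ∈ Set.Icc s b,
      iteratedDerivWithin n y (Set.Icc s b) t +
        ∑ i ∈ Finset.range n, p (n - i) t * iteratedDerivWithin i y (Set.Icc s b) t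
        = q t)
    (hinit : ∀ i < n, iteratedDerivWithin i y (Set.Icc s b) s = y₀ i) :
    ∀ t ∈ Set.Icc s b,
      iteratedDerivWithin n y (Set.Icc s b) t =
        -(∫ η in s..t,
            (∑ i ∈ Finset.range n,
              p (n - i) t * (t - η) ^ (n - i - 1) / (n - i - 1).factorial) *
              iteratedDerivWithin n y (Set.Icc s b) η) +
          q t -
          ∑ i ∈ Finset.range n, ∑ k ∈ Finset.range (n - i),
            y₀ (k + i) * p (n - i) t * (t - s) ^ k / k.factorial := by
  intro t ht
  set S := Set.Icc s b with hSdef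
  have hsS : s ∈ S := ⟨le_rfl, hs.2⟩
  rcases eq_or_lt_of_le ht.1 with hts | hts
  · -- t = s
    subst hts
    simp only [intervalIntegral.integral_same, neg_zero, zero_add]
    have h0 : ∀ i ∈ Finset.range n,
        (∑ k ∈ Finset.range (n - i), y₀ (k + i) * p (n - i) s * (s - s) ^ k / k.factorial)
          = y₀ i * p (n - i) s := by
      intro i hi
      rw [Finset.sum_eq_single 0]
      · simp
      · intro k _ hk0; simp [zero_pow hk0]
      · intro h
        exact absurd (Finset.mem_range.mpr (by have := Finset.mem_range.mp hi; omega)) h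
    rw [Finset.sum_congr rfl h0]
    have hode' := hode s hsS
    have hsum : ∑ i ∈ Finset.range n, p (n - i) s * iteratedDerivWithin i y S s
        = ∑ i ∈ Finset.range n, y₀ i * p (n - i) s :=
      Finset.sum_congr rfl fun i hi => by
        rw [hinit i (Finset.mem_range.mp hi)]; ring
    rw [hsum] at hode'
    linarith
  · -- s < t
    have hsb : s < b := lt_of_lt_of_le hts ht.2
    have hUD : UniqueDiffOn ℝ S := uniqueDiffOn_Icc hsb
    set φ := iteratedDerivWithin n y S with hφdef
    have hφcont : ContinuousOn φ S := hy.continuousOn_iteratedDerivWithin le_rfl hUD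
    have hsubIcc : Set.Icc s t ⊆ S := Set.Icc_subset_Icc le_rfl ht.2
    have key : ∀ i, i < n →
        iteratedDerivWithin i y S t =
          (∫ η in s..t, (t - η) ^ (n - i - 1) / (n - i - 1).factorial * φ η)
            + ∑ k ∈ Finset.range (n - i), y₀ (k + i) * (t - s) ^ k / k.factorial := by
      intro i hi
      set m := n - i - 1 with hm
      have hm1 : n - i = m + 1 := by omega
      have him1 : i + (m + 1) = n := by omega
      set f := iteratedDerivWithin i y S with hfdef
      have hfe : ∀ k : ℕ, Set.EqOn (iteratedDerivWithin k f S)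
          (iteratedDerivWithin (i + k) y S) S :=
        fun k x hx => iterDeriv_comp_aux hUD i k x hx
      have hfC : ContDiffOn ℝ (m + 1 : ℕ) f S := by
        have h1 : ContDiffOn ℝ ((m + 1 : ℕ) : ℕ∞) f S := by
          apply contDiffOn_of_continuousOn_differentiableOn_deriv
          · intro k hk
            refine ContinuousOn.congr (hy.continuousOn_iteratedDerivWithin ?_ hUD) (hfe k)
            have hk' : k ≤ m + 1 := by exact_mod_cast hk
            exact_mod_cast (show i + k ≤ n by omega)
          · intro k hk
            refine DifferentiableOn.congr (hy.differentiableOn_iteratedDerivWithin ?_ hUD) (hfe k)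
            have hk' : k < m + 1 := by exact_mod_cast hk
            exact_mod_cast (show i + k < n by omega)
        exact_mod_cast h1
      have hf' : DifferentiableOn ℝ (iteratedDerivWithin m f S) (Set.Ioo s b) := by
        intro x hx
        have hxS : x ∈ S := Set.Ioo_subset_Icc_self hx
        refine DifferentiableWithinAt.congr
          (((hy.differentiableOn_iteratedDerivWithin
              (show ((i + m : ℕ) : WithTop ℕ∞) < (n : ℕ) by exact_mod_cast (by omega : i + m < n))
              hUD) x hxS).mono Set.Ioo_subset_Icc_self)
          (fun z hz => hfe m (Set.Ioo_subset_Icc_self hz)) (hfe m hxS)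
      have hfm : ContDiffOn ℝ (m : ℕ) f S := hfC.of_le (by exact_mod_cast Nat.le_succ m)
      have hderiv : ∀ x ∈ Set.Ioo s t,
          HasDerivAt (fun x' => taylorWithinEval f m S x' t)
            ((m.factorial : ℝ)⁻¹ * (t - x) ^ m * φ x) x := by
        intro x hx
        have hx' : x ∈ Set.Ioo s b := ⟨hx.1, lt_of_lt_of_le hx.2 ht.2⟩
        have h := taylorWithinEval_hasDerivAt_Ioo t hsb hx' hfm hf'
        have heq : iteratedDerivWithin (m + 1) f S x = φ x := by
          rw [hfe (m + 1) (Set.Ioo_subset_Icc_self hx'), him1]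
        rw [smul_eq_mul, heq] at h
        exact h
      have hcont_g : ContinuousOn (fun x' => taylorWithinEval f m S x' t) (Set.Icc s t) :=
        (continuousOn_taylorWithinEval hUD hfm).mono hsubIcc
      have hint : IntervalIntegrable
          (fun x => (m.factorial : ℝ)⁻¹ * (t - x) ^ m * φ x) volume s t := by
        apply ContinuousOn.intervalIntegrable
        rw [Set.uIcc_of_le hts.le]
        exact (((continuous_const.mul
          ((continuous_const.sub continuous_id).pow m)).continuousOn).mul
          (hφcont.mono hsubIcc))
      have hFTC := intervalIntegral.integral_eq_sub_of_hasDerivAt_of_le hts.le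
        hcont_g hderiv hint
      rw [taylorWithinEval_self] at hFTC
      have htay : taylorWithinEval f m S s t
          = ∑ k ∈ Finset.range (n - i), y₀ (k + i) * (t - s) ^ k / k.factorial := by
        rw [taylor_within_apply, hm1]
        refine Finset.sum_congr rfl fun k hk => ?_
        have hk' : k < m + 1 := Finset.mem_range.mp hk
        have : iteratedDerivWithin k f S s = y₀ (k + i) := by
          rw [hfe k hsS, show i + k = k + i by omega, hinit (k + i) (by omega)]
        rw [smul_eq_mul, this]
        ring
      have hI : (∫ η in s..t, (t - η) ^ (n - i - 1) / (n - i - 1).factorial * φ η)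
          = ∫ x in s..t, (m.factorial : ℝ)⁻¹ * (t - x) ^ m * φ x := by
        refine intervalIntegral.integral_congr fun η _ => ?_
        rw [show n - i - 1 = m from rfl]; ring
      rw [hI, hFTC, ← htay]
      ring
    -- assemble
    have hodet := hode t ht
    have hIi : ∀ i ∈ Finset.range n, IntervalIntegrable
        (fun η => p (n - i) t * ((t - η) ^ (n - i - 1) / (n - i - 1).factorial * φ η))
        volume s t := by
      intro i _
      apply ContinuousOn.intervalIntegrable
      rw [Set.uIcc_of_le hts.le]
      exact continuous_const.continuousOn.mul
        ((((continuous_const.sub continuous_id).pow (n - i - 1)).div_const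
            _).continuousOn.mul (hφcont.mono hsubIcc))
    have hsum : ∑ i ∈ Finset.range n, p (n - i) t * iteratedDerivWithin i y S t
        = (∫ η in s..t,
            (∑ i ∈ Finset.range n,
              p (n - i) t * (t - η) ^ (n - i - 1) / (n - i - 1).factorial) * φ η)
          + ∑ i ∈ Finset.range n, ∑ k ∈ Finset.range (n - i),
              y₀ (k + i) * p (n - i) t * (t - s) ^ k / k.factorial := by
      have h1 : ∀ i ∈ Finset.range n,
          p (n - i) t * iteratedDerivWithin i y S t
            = (∫ η in s..t,
                p (n - i) t * ((t - η) ^ (n - i - 1) / (n - i - 1).factorial * φ η))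
              + ∑ k ∈ Finset.range (n - i),
                  y₀ (k + i) * p (n - i) t * (t - s) ^ k / k.factorial := by
        intro i hi
        rw [key i (Finset.mem_range.mp hi), mul_add,
          ← intervalIntegral.integral_const_mul, Finset.mul_sum]
        congr 1
        exact Finset.sum_congr rfl fun k _ => by ring
      rw [Finset.sum_congr rfl h1, Finset.sum_add_distrib,
        ← intervalIntegral.integral_finset_sum hIi]
      congr 1
      refine intervalIntegral.integral_congr fun η _ => ?_
      rw [Finset.sum_mul]
      exact Finset.sum_congr rfl fun i _ => by ring
    rw [hsum] at hodet
    linarith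
end

section
/- Let n ≥ 1, let p_1,…,p_n : ℝ → ℝ be continuous, fix s ∈ [a,b] and λ ∈ ℝ with λ ≠ 0, and consider the polynomial-type kernel K(t,σ) = Σ_{i=0}^{n-1} p_{n-i}(t) (t-σ)^{n-i-1}/(n-i-1)! with resolvent kernel Γ(λ;t,σ) = Σ_{ℓ=0}^∞ K_ℓ(t,σ) λ^ℓ. If y : ℝ → ℝ is n times continuously differentiable on [s,b] and satisfies y^{(n)}(t) - λ Σ_{i=0}^{n-1} p_{n-i}(t) y^{(i)}(t) = 0 on [s,b] with initial conditions y^{(i)}(s) = δ_{i,n-1} (Kronecker delta) for i = 0,…,n-1, then Γ(λ;t,s) = (1/λ) y^{(n)}(t) for all t ∈ [s,b]. -/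
open MeasureTheory intervalIntegral Set

/-- The polynomial-type kernel `K(t,σ) = Σ_{i=0}^{n-1} p_{n-i}(t) (t-σ)^{n-i-1}/(n-i-1)!`. -/
noncomputable def polyKernel (n : ℕ) (p : ℕ → ℝ → ℝ) (t σ : ℝ) : ℝ :=
  ∑ i ∈ Finset.range n, p (n - i) t * (t - σ) ^ (n - i - 1) / (n - i - 1).factorial

lemma polyKernel_continuous (n : ℕ) (p : ℕ → ℝ → ℝ) (hp : ∀ i, Continuous (p i)) :
    Continuous (fun q : ℝ × ℝ => polyKernel n p q.1 q.2) := by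
  unfold polyKernel
  exact continuous_finset_sum _ fun i _ =>
    (((hp _).comp continuous_fst).mul ((continuous_fst.sub continuous_snd).pow _)).div_const _

lemma polyKernel_eq (n : ℕ) (p : ℕ → ℝ → ℝ) (t σ : ℝ) :
    polyKernel n p t σ
      = ∑ i ∈ Finset.range n,
          p (n - i) t * ((t - σ) ^ (n - 1 - i) / ((n - 1 - i).factorial : ℝ)) := by
  unfold polyKernel
  refine Finset.sum_congr rfl fun i _ => ?_
  rw [Nat.sub_right_comm, mul_div_assoc]

lemma iterK_continuous (K : ℝ → ℝ → ℝ) (hK : Continuous fun q : ℝ × ℝ => K q.1 q.2)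
    (s : ℝ) : ∀ ℓ, Continuous fun t => iterK K ℓ t s := by
  intro ℓ
  induction ℓ with
  | zero => exact hK.comp (continuous_id.prodMk continuous_const)
  | succ m ih =>
    have hc : Continuous (Function.uncurry fun t η => K t η * iterK K m η s) :=
      hK.mul (ih.comp continuous_snd)
    have := intervalIntegral.continuous_parametric_intervalIntegral_of_continuous
      (μ := volume) (a₀ := s) hc continuous_id
    simpa [iterK] using this

lemma telescope_sum (w : ℝ) (A : ℕ → ℝ) (m : ℕ) :
    ∑ k ∈ Finset.range (m + 1),
      ((k : ℝ) * w ^ (k - 1) * (-1) / k.factorial * A k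
        + w ^ k / k.factorial * A (k + 1))
      = w ^ m / m.factorial * A (m + 1) := by
  induction m with
  | zero => simp
  | succ m ih =>
    rw [Finset.sum_range_succ, ih]
    have h2 : ((m.factorial : ℝ)) ≠ 0 := Nat.cast_ne_zero.2 m.factorial_ne_zero
    have h1 : ((m : ℝ) + 1) ≠ 0 := by positivity
    simp only [Nat.add_sub_cancel, Nat.factorial_succ]
    push_cast
    field_simp
    ring

lemma taylor_integral_remainder' (s b : ℝ) (hsb : s < b) (n : ℕ) (y : ℝ → ℝ)
    (hy : ContDiffOn ℝ n y (Set.Icc s b)) (i : ℕ) (hi : i < n)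
    (t : ℝ) (ht : t ∈ Set.Icc s b) :
    iteratedDerivWithin i y (Set.Icc s b) t
      = (∑ k ∈ Finset.range (n - i),
          (t - s) ^ k / k.factorial * iteratedDerivWithin (i + k) y (Set.Icc s b) s)
        + ∫ η in s..t, (t - η) ^ (n - 1 - i) / (n - 1 - i).factorial
            * iteratedDerivWithin n y (Set.Icc s b) η := by
  have U : UniqueDiffOn ℝ (Set.Icc s b) := uniqueDiffOn_Icc hsb
  set m := n - 1 - i with hm
  have hmn : i + m + 1 = n := by omega
  have hrange : n - i = m + 1 := by omega
  set D := fun (k : ℕ) => iteratedDerivWithin k y (Set.Icc s b) with hDdef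
  have hDall : ∀ k, k < n → ∀ x ∈ Set.Icc s b,
      HasDerivWithinAt (D k) (D (k + 1) x) (Set.Icc s b) x := by
    intro k hk x hx
    have hdiff : DifferentiableOn ℝ (D k) (Set.Icc s b) :=
      hy.differentiableOn_iteratedDerivWithin (by exact_mod_cast hk) U
    have h := (hdiff x hx).hasDerivWithinAt
    rwa [hDdef, ← iteratedDerivWithin_succ] at h
  have hcontD : ∀ k, k ≤ n → ContinuousOn (D k) (Set.Icc s b) := fun k hk =>
    hy.continuousOn_iteratedDerivWithin (by exact_mod_cast hk) U
  set φ : ℝ → ℝ := fun η => ∑ k ∈ Finset.range (m + 1),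
      (t - η) ^ k / k.factorial * D (i + k) η with hφ
  have hst : s ≤ t := ht.1
  have hder : ∀ x ∈ Set.Icc s b,
      HasDerivWithinAt φ ((t - x) ^ m / m.factorial * D n x) (Set.Icc s b) x := by
    intro x hx
    have hterm : ∀ k ∈ Finset.range (m + 1),
        HasDerivWithinAt (fun η => (t - η) ^ k / k.factorial * D (i + k) η)
          ((k : ℝ) * (t - x) ^ (k - 1) * (-1) / k.factorial * D (i + k) x
            + (t - x) ^ k / k.factorial * D (i + (k + 1)) x) (Set.Icc s b) x := by
      intro k hk
      have h1 : HasDerivAt (fun η : ℝ => (t - η) ^ k / k.factorial)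
          ((k : ℝ) * (t - x) ^ (k - 1) * (-1) / k.factorial) x :=
        (((hasDerivAt_id x).const_sub t).pow k).div_const _
      exact h1.hasDerivWithinAt.mul
        (hDall (i + k) (by have := Finset.mem_range.1 hk; omega) x hx)
    have hsum := HasDerivWithinAt.fun_sum hterm
    rw [telescope_sum (t - x) (fun k => D (i + k) x) m,
      show i + (m + 1) = n from by omega] at hsum
    exact hsum
  have hφcont : ContinuousOn φ (Set.Icc s t) := by
    apply continuousOn_finset_sum
    intro k hk
    exact (Continuous.continuousOn (by continuity)).mul
      ((hcontD (i + k) (by have := Finset.mem_range.1 hk; omega)).mono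
        (Set.Icc_subset_Icc le_rfl ht.2))
  have hderiv' : ∀ x ∈ Set.Ioo s t,
      HasDerivWithinAt φ ((t - x) ^ m / m.factorial * D n x) (Set.Ioi x) x := by
    intro x hx
    exact (hder x ⟨le_of_lt hx.1, le_trans (le_of_lt hx.2) ht.2⟩).mono_of_mem_nhdsWithin
      (mem_nhdsWithin_of_mem_nhds (Icc_mem_nhds hx.1 (lt_of_lt_of_le hx.2 ht.2)))
  have hint : IntervalIntegrable (fun x => (t - x) ^ m / m.factorial * D n x)
      volume s t := by
    apply ContinuousOn.intervalIntegrable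
    rw [Set.uIcc_of_le hst]
    exact (Continuous.continuousOn (by continuity)).mul
      ((hcontD n le_rfl).mono (Set.Icc_subset_Icc le_rfl ht.2))
  have hFTC := intervalIntegral.integral_eq_sub_of_hasDeriv_right_of_le hst hφcont hderiv' hint
  have hφt : φ t = D i t := by
    have h0 : ∀ k ∈ Finset.range (m + 1), k ≠ 0 →
        (t - t) ^ k / (k.factorial : ℝ) * D (i + k) t = 0 := by
      intro k _ hk0; simp [sub_self, zero_pow hk0]
    simp only [hφ]
    rw [Finset.sum_eq_single_of_mem 0 (Finset.mem_range.2 (Nat.succ_pos m)) h0]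
    simp
  have hφs : φ s = ∑ k ∈ Finset.range (n - i),
      (t - s) ^ k / k.factorial * iteratedDerivWithin (i + k) y (Set.Icc s b) s := by
    rw [hrange]
  rw [hφt] at hFTC
  rw [← hφs]
  show D i t = φ s + ∫ η in s..t, (t - η) ^ m / m.factorial * D n η
  linarith [hFTC]

lemma volterra_bound (K : ℝ → ℝ → ℝ)
    (s b M lam C : ℝ) (hM : 0 ≤ M) (hC : 0 ≤ C)
    (hbK : ∀ t ∈ Set.Icc s b, ∀ η ∈ Set.Icc s b, |K t η| ≤ M)
    (f : ℕ → ℝ → ℝ)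
    (hrec : ∀ m, ∀ t ∈ Set.Icc s b, f (m + 1) t = lam * ∫ η in s..t, K t η * f m η)
    (h0 : ∀ t ∈ Set.Icc s b, |f 0 t| ≤ C) :
    ∀ m, ∀ t ∈ Set.Icc s b, |f m t| ≤ C * (|lam| * M) ^ m * (t - s) ^ m / m.factorial := by
  intro m
  induction m with
  | zero => intro t ht; simpa using h0 t ht
  | succ m ih =>
    intro t ht
    have hst : s ≤ t := ht.1
    have htb : t ≤ b := ht.2
    have hts : (0:ℝ) ≤ t - s := sub_nonneg.2 hst
    set c : ℝ := M * (C * (|lam| * M) ^ m / m.factorial) with hc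
    have hc0 : 0 ≤ c := by positivity
    have hptwise : ∀ᵐ η ∂volume.restrict (Set.uIoc s t),
        ‖K t η * f m η‖ ≤ c * (η - s) ^ m := by
      refine (ae_restrict_mem measurableSet_uIoc).mono fun η hη => ?_
      rw [Set.uIoc_of_le hst] at hη
      have hηmem : η ∈ Set.Icc s b := ⟨le_of_lt hη.1, hη.2.trans htb⟩
      have hηs : (0:ℝ) ≤ η - s := by
        have := hη.1; linarith
      rw [Real.norm_eq_abs, abs_mul]
      calc |K t η| * |f m η|
          ≤ M * (C * (|lam| * M) ^ m * (η - s) ^ m / m.factorial) :=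
            mul_le_mul (hbK t ht η hηmem) (ih η hηmem) (abs_nonneg _) hM
        _ = c * (η - s) ^ m := by rw [hc]; ring
    have hgint : IntervalIntegrable (fun η => c * (η - s) ^ m) volume s t :=
      (continuous_const.mul ((continuous_id.sub continuous_const).pow m)).intervalIntegrable _ _
    have hbound := intervalIntegral.norm_integral_le_abs_of_norm_le hptwise hgint
    have hval : (∫ η in s..t, c * (η - s) ^ m) = c * ((t - s) ^ (m + 1) / (m + 1)) := by
      rw [intervalIntegral.integral_const_mul]
      have h2 : (∫ η in s..t, (η - s) ^ m) = ∫ x in s - s..t - s, x ^ m :=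
        intervalIntegral.integral_comp_sub_right (fun x => x ^ m) s
      rw [h2, sub_self, integral_pow, zero_pow (Nat.succ_ne_zero m), sub_zero]
    have hfac : ((m.factorial : ℝ)) ≠ 0 := Nat.cast_ne_zero.2 m.factorial_ne_zero
    have hm1 : ((m : ℝ) + 1) ≠ 0 := by positivity
    rw [hrec m t ht, abs_mul]
    calc |lam| * |∫ η in s..t, K t η * f m η|
        ≤ |lam| * |∫ η in s..t, c * (η - s) ^ m| :=
          mul_le_mul_of_nonneg_left hbound (abs_nonneg lam)
      _ = |lam| * (c * ((t - s) ^ (m + 1) / (m + 1))) := by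
          rw [hval, abs_of_nonneg (mul_nonneg hc0 (div_nonneg (pow_nonneg hts _) (by positivity)))]
      _ = C * (|lam| * M) ^ (m + 1) * (t - s) ^ (m + 1) / (m + 1).factorial := by
          rw [Nat.factorial_succ, hc]
          push_cast
          field_simp
          ring

set_option maxHeartbeats 2000000 in
/-- **Resolvent kernel of a polynomial-type kernel via a linear ODE** (continuous case
`T = ℝ`): if `y` is `n` times continuously differentiable on `[s,b]`, solves
`y⁽ⁿ⁾(t) - λ Σ_{i<n} p_{n-i}(t) y⁽ⁱ⁾(t) = 0` on `[s,b]` with Kronecker-delta initial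
conditions `y⁽ⁱ⁾(s) = δ_{i,n-1}`, then `Γ(λ;t,s) = (1/λ) y⁽ⁿ⁾(t)` on `[s,b]`. -/
theorem resolventKer_of_polyKernel
    (a b : ℝ) (hab : a < b) (n : ℕ) (hn : 1 ≤ n)
    (p : ℕ → ℝ → ℝ) (hp : ∀ i, Continuous (p i))
    (s : ℝ) (hs : s ∈ Set.Icc a b)
    (lam : ℝ) (hlam : lam ≠ 0)
    (y : ℝ → ℝ) (hy : ContDiffOn ℝ n y (Set.Icc s b))
    (hode : ∀ t ∈ Set.Icc s b,
      iteratedDerivWithin n y (Set.Icc s b) t -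
        lam * ∑ i ∈ Finset.range n, p (n - i) t * iteratedDerivWithin i y (Set.Icc s b) t
        = 0)
    (hinit : ∀ i < n,
      iteratedDerivWithin i y (Set.Icc s b) s = if i = n - 1 then 1 else 0) :
    ∀ t ∈ Set.Icc s b,
      resolventKer (polyKernel n p) lam t s =
        (1 / lam) * iteratedDerivWithin n y (Set.Icc s b) t := by
  intro t ht
  have hsble : s ≤ b := hs.2
  rcases eq_or_lt_of_le hsble with hsb | hsb
  · -- degenerate case s = b
    have hts : t = s := le_antisymm (hsb ▸ ht.2) ht.1
    subst hts
    have htsum : resolventKer (polyKernel n p) lam t t = polyKernel n p t t := by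
      unfold resolventKer
      rw [tsum_eq_single 0]
      · simp [iterK]
      · intro ℓ hℓ
        cases ℓ with
        | zero => exact absurd rfl hℓ
        | succ m => simp [iterK, intervalIntegral.integral_same]
    have hKss : polyKernel n p t t = p 1 t := by
      unfold polyKernel
      rw [Finset.sum_eq_single (n - 1)]
      · have e1 : n - (n - 1) = 1 := by omega
        simp [e1, sub_self]
      · intro i hi hine
        have hi' := Finset.mem_range.1 hi
        simp [sub_self, zero_pow (show n - i - 1 ≠ 0 by omega)]
      · intro h; exact absurd (Finset.mem_range.2 (by omega)) h
    have hDn : iteratedDerivWithin n y (Set.Icc t b) t = lam * p 1 t := by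
      have h1 := sub_eq_zero.1 (hode t ht)
      rw [h1]; congr 1
      rw [Finset.sum_eq_single (n - 1)]
      · rw [hinit (n - 1) (by omega), if_pos rfl, mul_one,
          show n - (n - 1) = 1 from by omega]
      · intro i hi hine
        rw [hinit i (Finset.mem_range.1 hi), if_neg hine, mul_zero]
      · intro h; exact absurd (Finset.mem_range.2 (by omega)) h
    rw [htsum, hKss, hDn]
    field_simp
  · -- main case s < b
    have U : UniqueDiffOn ℝ (Set.Icc s b) := uniqueDiffOn_Icc hsb
    have hKc : Continuous fun q : ℝ × ℝ => polyKernel n p q.1 q.2 :=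
      polyKernel_continuous n p hp
    have hKc1 : ∀ u : ℝ, Continuous fun η => polyKernel n p u η := fun u =>
      hKc.comp (continuous_const.prodMk continuous_id)
    have hiterKc : ∀ ℓ, Continuous fun u => iterK (polyKernel n p) ℓ u s :=
      iterK_continuous (polyKernel n p) hKc s
    have hDnc : ContinuousOn (iteratedDerivWithin n y (Set.Icc s b)) (Set.Icc s b) :=
      hy.continuousOn_iteratedDerivWithin le_rfl U
    -- bound for the kernel
    obtain ⟨M0, hM0⟩ := (isCompact_Icc.prod isCompact_Icc).exists_bound_of_continuousOn
      (s := Set.Icc s b ×ˢ Set.Icc s b) hKc.continuousOn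
    set M : ℝ := max M0 0 with hMdef
    have hM : 0 ≤ M := le_max_right _ _
    have hbK : ∀ u ∈ Set.Icc s b, ∀ η ∈ Set.Icc s b, |polyKernel n p u η| ≤ M := by
      intro u hu η hη
      exact le_trans (hM0 (u, η) (Set.mk_mem_prod hu hη)) (le_max_left _ _)
    -- bound for (1/lam) * y⁽ⁿ⁾
    obtain ⟨C0, hC0⟩ := isCompact_Icc.exists_bound_of_continuousOn
      (continuousOn_const.mul hDnc : ContinuousOn
        (fun u => (1 / lam) * iteratedDerivWithin n y (Set.Icc s b) u) (Set.Icc s b))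
    set C : ℝ := max C0 0 with hCdef
    have hC : 0 ≤ C := le_max_right _ _
    have hCb : ∀ u ∈ Set.Icc s b,
        |(1 / lam) * iteratedDerivWithin n y (Set.Icc s b) u| ≤ C := fun u hu =>
      le_trans (hC0 u hu) (le_max_left _ _)
    -- Taylor expansions with the initial conditions plugged in
    have htayc : ∀ u ∈ Set.Icc s b, ∀ i ∈ Finset.range n,
        iteratedDerivWithin i y (Set.Icc s b) u
          = (u - s) ^ (n - 1 - i) / (n - 1 - i).factorial
            + ∫ η in s..u, (u - η) ^ (n - 1 - i) / (n - 1 - i).factorial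
                * iteratedDerivWithin n y (Set.Icc s b) η := by
      intro u hu i hi
      have hi' := Finset.mem_range.1 hi
      have h := taylor_integral_remainder' s b hsb n y hy i hi' u hu
      rw [h]; congr 1
      rw [Finset.sum_eq_single (n - 1 - i)]
      · rw [hinit (i + (n - 1 - i)) (by omega), if_pos (by omega), mul_one]
      · intro k hk hkne
        have hk' := Finset.mem_range.1 hk
        rw [hinit (i + k) (by omega), if_neg (by omega), mul_zero]
      · intro h'; exact absurd (Finset.mem_range.2 (by omega)) h'
    -- Volterra integral equation for y⁽ⁿ⁾
    have hVolt : ∀ u ∈ Set.Icc s b,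
        iteratedDerivWithin n y (Set.Icc s b) u
          = lam * (polyKernel n p u s
            + ∫ η in s..u, polyKernel n p u η * iteratedDerivWithin n y (Set.Icc s b) η) := by
      intro u hu
      have hsu : s ≤ u := hu.1
      have hDu := sub_eq_zero.1 (hode u hu)
      rw [hDu]; congr 1
      have e1 : ∀ i ∈ Finset.range n,
          p (n - i) u * iteratedDerivWithin i y (Set.Icc s b) u
            = p (n - i) u * ((u - s) ^ (n - 1 - i) / (n - 1 - i).factorial)
              + ∫ η in s..u, p (n - i) u * ((u - η) ^ (n - 1 - i) / (n - 1 - i).factorial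
                  * iteratedDerivWithin n y (Set.Icc s b) η) := by
        intro i hi
        rw [htayc u hu i hi, mul_add, ← intervalIntegral.integral_const_mul]
      rw [Finset.sum_congr rfl e1, Finset.sum_add_distrib]
      congr 1
      · exact (polyKernel_eq n p u s).symm
      · rw [← intervalIntegral.integral_finset_sum]
        · apply intervalIntegral.integral_congr
          intro η hη
          simp only [polyKernel_eq n p u η, Finset.sum_mul]
          exact Finset.sum_congr rfl fun i _ => by ring
        · intro i hi
          apply ContinuousOn.intervalIntegrable
          rw [Set.uIcc_of_le hsu]
          exact continuousOn_const.mul ((Continuous.continuousOn (by continuity)).mul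
            (hDnc.mono (Set.Icc_subset_Icc le_rfl hu.2)))
    -- the remainder sequence
    set R : ℕ → ℝ → ℝ := fun m u =>
      (1 / lam) * iteratedDerivWithin n y (Set.Icc s b) u
        - ∑ ℓ ∈ Finset.range m, iterK (polyKernel n p) ℓ u s * lam ^ ℓ with hRdef
    have hsplit : ∀ j (u : ℝ), R (j + 1) u = R j u - iterK (polyKernel n p) j u s * lam ^ j := by
      intro j u
      simp only [hRdef, Finset.sum_range_succ]
      ring
    have hRcont : ∀ m, ContinuousOn (R m) (Set.Icc s b) := by
      intro m
      apply ContinuousOn.sub (continuousOn_const.mul hDnc)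
      exact (continuous_finset_sum _ fun ℓ _ => (hiterKc ℓ).mul continuous_const).continuousOn
    -- the Volterra equation for (1/lam) * y⁽ⁿ⁾ in remainder form
    have hgV : ∀ u ∈ Set.Icc s b,
        (1 / lam) * iteratedDerivWithin n y (Set.Icc s b) u
          = polyKernel n p u s
            + lam * ∫ η in s..u, polyKernel n p u η
                * ((1 / lam) * iteratedDerivWithin n y (Set.Icc s b) η) := by
      intro u hu
      have h3 : (∫ η in s..u, polyKernel n p u η
            * ((1 / lam) * iteratedDerivWithin n y (Set.Icc s b) η))
          = (1 / lam) * ∫ η in s..u,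
              polyKernel n p u η * iteratedDerivWithin n y (Set.Icc s b) η := by
        rw [← intervalIntegral.integral_const_mul]
        apply intervalIntegral.integral_congr
        intro η _
        ring
      rw [h3, hVolt u hu]
      field_simp
    -- recursion for the remainders
    have hRrec : ∀ m, ∀ u ∈ Set.Icc s b,
        R (m + 1) u = lam * ∫ η in s..u, polyKernel n p u η * R m η := by
      intro m
      induction m with
      | zero =>
        intro u hu
        have h1 : ∀ η : ℝ, R 0 η = (1 / lam) * iteratedDerivWithin n y (Set.Icc s b) η := by
          intro η; simp [hRdef]
        simp only [h1]
        rw [hsplit 0 u]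
        have h2 : R 0 u = (1 / lam) * iteratedDerivWithin n y (Set.Icc s b) u := h1 u
        rw [h2, pow_zero, mul_one, show iterK (polyKernel n p) 0 u s = polyKernel n p u s from rfl]
        rw [hgV u hu]
        ring
      | succ m ih =>
        intro u hu
        have hsu : s ≤ u := hu.1
        have hint1 : IntervalIntegrable (fun η => polyKernel n p u η * R m η) volume s u := by
          apply ContinuousOn.intervalIntegrable
          rw [Set.uIcc_of_le hsu]
          exact ((hKc1 u).continuousOn).mul ((hRcont m).mono (Set.Icc_subset_Icc le_rfl hu.2))
        have hint2 : IntervalIntegrable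
            (fun η => polyKernel n p u η * iterK (polyKernel n p) m η s) volume s u :=
          (((hKc1 u)).mul (hiterKc m)).intervalIntegrable _ _
        rw [hsplit (m + 1) u, ih u hu,
          show iterK (polyKernel n p) (m + 1) u s
            = ∫ η in s..u, polyKernel n p u η * iterK (polyKernel n p) m η s from rfl]
        have h4 : (∫ η in s..u, polyKernel n p u η * R (m + 1) η)
            = (∫ η in s..u, polyKernel n p u η * R m η)
              - lam ^ m * ∫ η in s..u, polyKernel n p u η * iterK (polyKernel n p) m η s := by
          rw [← intervalIntegral.integral_const_mul,
            ← intervalIntegral.integral_sub hint1 (hint2.const_mul _)]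
          apply intervalIntegral.integral_congr
          intro η _
          simp only [hsplit]
          ring
        rw [h4]
        ring
    have hR0b : ∀ u ∈ Set.Icc s b, |R 0 u| ≤ C := by
      intro u hu
      simpa [hRdef] using hCb u hu
    have hRbound := volterra_bound (polyKernel n p) s b M lam C hM hC hbK R hRrec hR0b
    -- bound for the iterated kernels
    have hIrec : ∀ m, ∀ u ∈ Set.Icc s b,
        iterK (polyKernel n p) (m + 1) u s
          = (1:ℝ) * ∫ η in s..u, polyKernel n p u η * iterK (polyKernel n p) m η s := by
      intro m u _
      rw [one_mul]
      rfl
    have hI0b : ∀ u ∈ Set.Icc s b, |iterK (polyKernel n p) 0 u s| ≤ M := by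
      intro u hu
      exact hbK u hu s ⟨le_rfl, hsble⟩
    have hIbound := volterra_bound (polyKernel n p) s b M 1 M hM hM hbK
      (fun m u => iterK (polyKernel n p) m u s) hIrec hI0b
    -- pass to the limit
    have hts0 : (0:ℝ) ≤ t - s := sub_nonneg.2 ht.1
    have htsbs : t - s ≤ b - s := sub_le_sub_right ht.2 s
    have hbs0 : (0:ℝ) ≤ b - s := sub_nonneg.2 hsble
    have hlamM : 0 ≤ |lam| * M := mul_nonneg (abs_nonneg lam) hM
    have hq0 : 0 ≤ |lam| * M * (b - s) := mul_nonneg hlamM hbs0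
    have hbase : 0 ≤ |lam| * M * (t - s) := mul_nonneg hlamM hts0
    have hbasele : |lam| * M * (t - s) ≤ |lam| * M * (b - s) :=
      mul_le_mul_of_nonneg_left htsbs hlamM
    have hfb : ∀ ℓ : ℕ, ‖iterK (polyKernel n p) ℓ t s * lam ^ ℓ‖
        ≤ M * ((|lam| * M * (b - s)) ^ ℓ / ℓ.factorial) := by
      intro ℓ
      rw [Real.norm_eq_abs, abs_mul, abs_pow]
      have h1 := mul_le_mul_of_nonneg_right (hIbound ℓ t ht)
        (pow_nonneg (abs_nonneg lam) ℓ)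
      calc |iterK (polyKernel n p) ℓ t s| * |lam| ^ ℓ
          ≤ M * (|(1:ℝ)| * M) ^ ℓ * (t - s) ^ ℓ / ℓ.factorial * |lam| ^ ℓ := h1
        _ = M * ((|lam| * M * (t - s)) ^ ℓ / ℓ.factorial) := by
            rw [abs_one, one_mul, mul_pow, mul_pow]
            ring
        _ ≤ M * ((|lam| * M * (b - s)) ^ ℓ / ℓ.factorial) := by
            apply mul_le_mul_of_nonneg_left _ hM
            exact div_le_div_of_nonneg_right (pow_le_pow_left₀ hbase hbasele ℓ)
              (Nat.cast_nonneg _)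
    have hsummable : Summable fun ℓ : ℕ => iterK (polyKernel n p) ℓ t s * lam ^ ℓ :=
      Summable.of_norm_bounded
        ((Real.summable_pow_div_factorial (|lam| * M * (b - s))).mul_left M) hfb
    have htends1 : Filter.Tendsto
        (fun m => ∑ ℓ ∈ Finset.range m, iterK (polyKernel n p) ℓ t s * lam ^ ℓ)
        Filter.atTop (nhds (resolventKer (polyKernel n p) lam t s)) :=
      hsummable.hasSum.tendsto_sum_nat
    have hRb2 : ∀ m : ℕ, ‖R m t‖ ≤ C * ((|lam| * M * (b - s)) ^ m / m.factorial) := by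
      intro m
      rw [Real.norm_eq_abs]
      calc |R m t| ≤ C * (|lam| * M) ^ m * (t - s) ^ m / m.factorial := hRbound m t ht
        _ = C * ((|lam| * M * (t - s)) ^ m / m.factorial) := by
            rw [mul_pow (|lam| * M) (t - s) m]; ring
        _ ≤ C * ((|lam| * M * (b - s)) ^ m / m.factorial) := by
            apply mul_le_mul_of_nonneg_left _ hC
            exact div_le_div_of_nonneg_right (pow_le_pow_left₀ hbase hbasele m)
              (Nat.cast_nonneg _)
    have hRtend : Filter.Tendsto (fun m => R m t) Filter.atTop (nhds 0) := by
      apply squeeze_zero_norm hRb2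
      have h6 := ((Real.summable_pow_div_factorial
        (|lam| * M * (b - s))).tendsto_atTop_zero).const_mul C
      simpa using h6
    have hps : ∀ m : ℕ,
        (∑ ℓ ∈ Finset.range m, iterK (polyKernel n p) ℓ t s * lam ^ ℓ)
          = (1 / lam) * iteratedDerivWithin n y (Set.Icc s b) t - R m t := by
      intro m
      rw [hRdef]
      ring
    have htends2 : Filter.Tendsto
        (fun m => ∑ ℓ ∈ Finset.range m, iterK (polyKernel n p) ℓ t s * lam ^ ℓ)
        Filter.atTop (nhds ((1 / lam) * iteratedDerivWithin n y (Set.Icc s b) t)) := by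
      have h5 := hRtend.const_sub ((1 / lam) * iteratedDerivWithin n y (Set.Icc s b) t)
      rw [sub_zero] at h5
      exact h5.congr fun m => (hps m).symm
    exact tendsto_nhds_unique htends1 htends2
end
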